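/- Posterior consistency via total variation of conditionals: if P* ≪ Q on a product space of infinite binary sequences and Δₙ = E_Q[dP*/dQ | Fₙ] → dP*/dQ in L¹(Q), then the expected total variation distance between the conditional laws P*(·|z₁,…,zₙ) and Q(·|z₁,…,zₙ) of the future sequence (z_{n+1}, z_{n+2}, …) converges to 0 under P*. -/

import Mathlib

open MeasureTheory ProbabilityTheory Filter

/-- Total variation distance between two measures. -/
noncomputable def tvDist {α : Type*} [MeasurableSpace α] (μ ν : Measure α) : ℝ :=
  ⨆ A : {s : Set α // MeasurableSet s}, |(μ A.1).toReal - (ν A.1).toReal|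

lemma tvDist_le_of_forall {α : Type*} [MeasurableSpace α] {μ ν : Measure α} {r : ℝ}
    (h : ∀ s : Set α, MeasurableSet s → |(μ s).toReal - (ν s).toReal| ≤ r) :
    tvDist μ ν ≤ r := by
  have : Nonempty {s : Set α // MeasurableSet s} := ⟨⟨∅, MeasurableSet.empty⟩⟩
  exact ciSup_le fun A => h A.1 A.2

lemma tvDist_nonneg {α : Type*} [MeasurableSpace α] (μ ν : Measure α)
    [IsProbabilityMeasure μ] [IsProbabilityMeasure ν] : 0 ≤ tvDist μ ν := by
  have hb : ∀ A : {s : Set α // MeasurableSet s}, |(μ A.1).toReal - (ν A.1).toReal| ≤ 2 := by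
    intro A
    have h1 : (μ A.1).toReal ≤ 1 := by
      have := ENNReal.toReal_mono (by simp) (prob_le_one (μ := μ) (s := A.1))
      simpa using this
    have h2 : (ν A.1).toReal ≤ 1 := by
      have := ENNReal.toReal_mono (by simp) (prob_le_one (μ := ν) (s := A.1))
      simpa using this
    have h3 : 0 ≤ (μ A.1).toReal := ENNReal.toReal_nonneg
    have h4 : 0 ≤ (ν A.1).toReal := ENNReal.toReal_nonneg
    rw [abs_sub_le_iff]; constructor <;> linarith
  have hbdd : BddAbove (Set.range fun A : {s : Set α // MeasurableSet s} =>
      |(μ A.1).toReal - (ν A.1).toReal|) := by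
    refine ⟨2, ?_⟩; rintro _ ⟨A, rfl⟩; exact hb A
  have := le_ciSup hbdd ⟨(∅ : Set α), MeasurableSet.empty⟩
  simpa [tvDist] using this

/-- On an atom `{X = x}` of positive mass, the conditional distribution is elementary. -/
lemma condDistrib_atom_mul {α β Ω : Type*} [MeasurableSpace α] [MeasurableSpace β]
    [MeasurableSingletonClass β] [MeasurableSpace Ω] [StandardBorelSpace Ω] [Nonempty Ω]
    (μ : Measure α) [IsFiniteMeasure μ] {X : α → β} {Y : α → Ω}
    (hX : Measurable X) (hY : Measurable Y) (x : β) {s : Set Ω} (hs : MeasurableSet s) :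
    condDistrib Y X μ x s * μ (X ⁻¹' {x}) = μ (X ⁻¹' {x} ∩ Y ⁻¹' s) := by
  have h := setLIntegral_preimage_condDistrib (μ := μ) hX hY.aemeasurable hs
    (measurableSet_singleton x)
  rw [← h]
  rw [setLIntegral_congr_fun (hX (measurableSet_singleton x))
    (fun z hz => by
      show condDistrib Y X μ (X z) s = condDistrib Y X μ x s
      rw [show X z = x from hz])]
  exact (setLIntegral_const _ _).symm

theorem stmt8
    (Pstar Q : Measure (ℕ → Bool)) [IsProbabilityMeasure Pstar] [IsProbabilityMeasure Q]
    (habs : Pstar ≪ Q)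
    -- past: first n coordinates; future: coordinates after time n
    (past : (n : ℕ) → (ℕ → Bool) → (Fin n → Bool))
    (hpast : ∀ n z i, past n z i = z i)
    (future : ℕ → (ℕ → Bool) → (ℕ → Bool))
    (hfuture : ∀ n z k, future n z k = z (n + k))
    -- Fₙ = σ(z₁,…,zₙ)
    (F : ℕ → MeasurableSpace (ℕ → Bool))
    (hF : ∀ n, F n = MeasurableSpace.comap (past n) inferInstance)
    -- density and its conditional expectations
    (Δ : (ℕ → Bool) → ℝ) (hΔ : Δ =ᵐ[Q] fun z => (Pstar.rnDeriv Q z).toReal)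
    (hΔint : Integrable Δ Q)
    -- L¹ convergence of the conditional likelihood ratios Δₙ → Δ
    (hL1 : Tendsto (fun n => ∫ z, |(Q[Δ | F n]) z - Δ z| ∂Q) atTop (nhds 0)) :
    Tendsto (fun n => ∫ z,
        tvDist (condDistrib (future n) (past n) Pstar (past n z))
               (condDistrib (future n) (past n) Q (past n z)) ∂Pstar)
      atTop (nhds 0) := by
  classical
  have hpasteq : ∀ n, past n = fun z (i : Fin n) => z i :=
    fun n => funext fun z => funext fun i => hpast n z i
  have hpm : ∀ n, Measurable (past n) := fun n => by
    rw [hpasteq]; exact measurable_pi_lambda _ fun i => measurable_pi_apply _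
  have hfm : ∀ n, Measurable (future n) := fun n => by
    have h : future n = fun z k => z (n + k) :=
      funext fun z => funext fun k => hfuture n z k
    rw [h]; exact measurable_pi_lambda _ fun k => measurable_pi_apply _
  have hFle : ∀ n, F n ≤ (inferInstance : MeasurableSpace (ℕ → Bool)) := fun n => by
    rw [hF n]; exact (hpm n).comap_le
  have habs_int : ∀ n, Integrable (fun z => |(Q[Δ | F n]) z - Δ z|) Q :=
    fun n => (integrable_condExp.sub hΔint).abs
  -- key inequality
  have key : ∀ n, ∫ z, tvDist (condDistrib (future n) (past n) Pstar (past n z))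
               (condDistrib (future n) (past n) Q (past n z)) ∂Pstar
      ≤ ∫ z, |(Q[Δ | F n]) z - Δ z| ∂Q := by
    intro n
    set C : (Fin n → Bool) → Set (ℕ → Bool) := fun x => past n ⁻¹' {x} with hC
    have hCmeas : ∀ x, MeasurableSet (C x) := fun x => hpm n (measurableSet_singleton x)
    have hCF : ∀ x, MeasurableSet[F n] (C x) := fun x => by
      rw [hF n]; exact ⟨{x}, measurableSet_singleton x, rfl⟩
    -- condexp is constant on atoms
    have hconst0 : ∀ g : (ℕ → Bool) → ℝ, Measurable[F n] g →
        ∀ z z', past n z = past n z' → g z = g z' := by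
      intro g hg z z' hzz
      rw [hF n] at hg
      obtain ⟨T, -, hTeq⟩ := hg (measurableSet_singleton (g z))
      have hz : z ∈ past n ⁻¹' T := by
        rw [hTeq]; exact Set.mem_singleton _
      have hz' : z' ∈ past n ⁻¹' T := by
        show past n z' ∈ T; rw [← hzz]; exact hz
      rw [hTeq] at hz'
      exact hz'.symm
    have hconst : ∀ z z', past n z = past n z' → (Q[Δ | F n]) z = (Q[Δ | F n]) z' :=
      hconst0 _ stronglyMeasurable_condExp.measurable
    -- set integral of Δ equals the Pstar-measure
    have hPS : ∀ S : Set (ℕ → Bool), MeasurableSet S →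
        ∫ z in S, Δ z ∂Q = (Pstar S).toReal := by
      intro S hS
      calc ∫ z in S, Δ z ∂Q = ∫ z in S, (Pstar.rnDeriv Q z).toReal ∂Q :=
            setIntegral_congr_ae hS (hΔ.mono fun z hz _ => hz)
        _ = (Pstar S).toReal := Measure.setIntegral_toReal_rnDeriv habs S
    -- per-atom bound
    have atom : ∀ x : Fin n → Bool,
        (Pstar (C x)).toReal * tvDist (condDistrib (future n) (past n) Pstar x)
          (condDistrib (future n) (past n) Q x)
          ≤ ∫ z in C x, |(Q[Δ | F n]) z - Δ z| ∂Q := by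
      intro x
      have hInonneg : 0 ≤ ∫ z in C x, |(Q[Δ | F n]) z - Δ z| ∂Q :=
        integral_nonneg fun z => abs_nonneg _
      by_cases hP0 : Pstar (C x) = 0
      · simpa [hP0] using hInonneg
      have hQ0 : Q (C x) ≠ 0 := fun h => hP0 (habs h)
      have hpPos : 0 < (Pstar (C x)).toReal := ENNReal.toReal_pos hP0 (measure_ne_top _ _)
      -- a point of the atom, and the constant value of the condexp on it
      set z₀ : ℕ → Bool := fun i => if h : i < n then x ⟨i, h⟩ else false with hz₀
      have hz₀mem : past n z₀ = x := by
        funext i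
        rw [hpast n z₀ i]
        simp [hz₀, i.isLt]
      set c : ℝ := (Q[Δ | F n]) z₀ with hc
      have hconstC : ∀ z ∈ C x, (Q[Δ | F n]) z = c :=
        fun z hz => hconst z z₀ (by rw [hz₀mem]; exact hz)
      -- c * Q(C) = P(C)
      have hcq : (Q (C x)).toReal * c = (Pstar (C x)).toReal := by
        have h1 : ∫ z in C x, (Q[Δ | F n]) z ∂Q = ∫ z in C x, Δ z ∂Q :=
          setIntegral_condExp (hFle n) hΔint (hCF x)
        have h2 : ∫ z in C x, (Q[Δ | F n]) z ∂Q = (Q (C x)).toReal * c := by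
          rw [setIntegral_congr_fun (hCmeas x) hconstC, setIntegral_const, smul_eq_mul, measureReal_def]
        rw [← h2, h1, hPS _ (hCmeas x)]
      -- kernel identities, in real form
      have hkerP : ∀ s : Set (ℕ → Bool), MeasurableSet s →
          (condDistrib (future n) (past n) Pstar x s).toReal * (Pstar (C x)).toReal
            = (Pstar (C x ∩ future n ⁻¹' s)).toReal := by
        intro s hs
        have := condDistrib_atom_mul Pstar (hpm n) (hfm n) x hs
        rw [← ENNReal.toReal_mul, this]
      have hkerQ : ∀ s : Set (ℕ → Bool), MeasurableSet s →
          (condDistrib (future n) (past n) Q x s).toReal * (Q (C x)).toReal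
            = (Q (C x ∩ future n ⁻¹' s)).toReal := by
        intro s hs
        have := condDistrib_atom_mul Q (hpm n) (hfm n) x hs
        rw [← ENNReal.toReal_mul, this]
      -- per measurable set bound
      have hsetbd : ∀ s : Set (ℕ → Bool), MeasurableSet s →
          |(condDistrib (future n) (past n) Pstar x s).toReal
            - (condDistrib (future n) (past n) Q x s).toReal| * (Pstar (C x)).toReal
          ≤ ∫ z in C x, |(Q[Δ | F n]) z - Δ z| ∂Q := by
        intro s hs
        have hCs : MeasurableSet (C x ∩ future n ⁻¹' s) := (hCmeas x).inter (hfm n hs)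
        have hsub : C x ∩ future n ⁻¹' s ⊆ C x := Set.inter_subset_left
        -- P-side value
        have hPval : (condDistrib (future n) (past n) Pstar x s).toReal * (Pstar (C x)).toReal
            = ∫ z in C x ∩ future n ⁻¹' s, Δ z ∂Q := by
          rw [hkerP s hs, hPS _ hCs]
        -- Q-side value
        have hQval : (condDistrib (future n) (past n) Q x s).toReal * (Pstar (C x)).toReal
            = ∫ z in C x ∩ future n ⁻¹' s, (Q[Δ | F n]) z ∂Q := by
          have h3 : ∫ z in C x ∩ future n ⁻¹' s, (Q[Δ | F n]) z ∂Q
              = (Q (C x ∩ future n ⁻¹' s)).toReal * c := by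
            rw [setIntegral_congr_fun hCs (fun z hz => hconstC z (hsub hz)),
              setIntegral_const, smul_eq_mul, measureReal_def]
          rw [h3, ← hcq, ← hkerQ s hs]
          ring
        have h4 : (∫ z in C x ∩ future n ⁻¹' s, (Q[Δ | F n]) z ∂Q)
              - ∫ z in C x ∩ future n ⁻¹' s, Δ z ∂Q
            = ∫ z in C x ∩ future n ⁻¹' s, ((Q[Δ | F n]) z - Δ z) ∂Q :=
          (integral_sub integrable_condExp.integrableOn hΔint.integrableOn).symm
        have habsmul : |(condDistrib (future n) (past n) Pstar x s).toReal
              - (condDistrib (future n) (past n) Q x s).toReal| * (Pstar (C x)).toReal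
            = |(condDistrib (future n) (past n) Pstar x s).toReal * (Pstar (C x)).toReal
              - (condDistrib (future n) (past n) Q x s).toReal * (Pstar (C x)).toReal| := by
          rw [← sub_mul, abs_mul, abs_of_nonneg (ENNReal.toReal_nonneg :
            (0:ℝ) ≤ (Pstar (C x)).toReal)]
        have h5 := norm_integral_le_integral_norm
          (μ := Q.restrict (C x ∩ future n ⁻¹' s)) (fun z => (Q[Δ | F n]) z - Δ z)
        simp only [Real.norm_eq_abs] at h5
        rw [habsmul, hPval, hQval, abs_sub_comm, h4]
        calc |∫ z in C x ∩ future n ⁻¹' s, ((Q[Δ | F n]) z - Δ z) ∂Q|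
            ≤ ∫ z in C x ∩ future n ⁻¹' s, |(Q[Δ | F n]) z - Δ z| ∂Q :=
              h5
          _ ≤ ∫ z in C x, |(Q[Δ | F n]) z - Δ z| ∂Q :=
              setIntegral_mono_set (habs_int n).integrableOn
                (Filter.Eventually.of_forall fun z => abs_nonneg _)
                (HasSubset.Subset.eventuallyLE hsub)
      -- conclude via sup
      have htv : tvDist (condDistrib (future n) (past n) Pstar x)
          (condDistrib (future n) (past n) Q x)
          ≤ (∫ z in C x, |(Q[Δ | F n]) z - Δ z| ∂Q) / (Pstar (C x)).toReal := by
        refine tvDist_le_of_forall fun s hs => ?_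
        rw [le_div_iff₀ hpPos]
        exact hsetbd s hs
      calc (Pstar (C x)).toReal * tvDist (condDistrib (future n) (past n) Pstar x)
            (condDistrib (future n) (past n) Q x)
          ≤ (Pstar (C x)).toReal
            * ((∫ z in C x, |(Q[Δ | F n]) z - Δ z| ∂Q) / (Pstar (C x)).toReal) :=
            mul_le_mul_of_nonneg_left htv hpPos.le
        _ = ∫ z in C x, |(Q[Δ | F n]) z - Δ z| ∂Q := by
            field_simp
    -- assemble: integral equals finite sum over atoms
    have hg : Measurable fun x : Fin n → Bool =>
        tvDist (condDistrib (future n) (past n) Pstar x)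
          (condDistrib (future n) (past n) Q x) := measurable_of_countable _
    haveI : IsProbabilityMeasure (Pstar.map (past n)) :=
      Measure.isProbabilityMeasure_map (hpm n).aemeasurable
    have hsum : ∫ z, tvDist (condDistrib (future n) (past n) Pstar (past n z))
          (condDistrib (future n) (past n) Q (past n z)) ∂Pstar
        = ∑ x : Fin n → Bool, (Pstar (C x)).toReal
            * tvDist (condDistrib (future n) (past n) Pstar x)
              (condDistrib (future n) (past n) Q x) := by
      rw [← integral_map (hpm n).aemeasurable hg.aestronglyMeasurable,
        integral_fintype Integrable.of_finite]
      refine Finset.sum_congr rfl fun x _ => ?_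
      rw [measureReal_def, Measure.map_apply (hpm n) (measurableSet_singleton x), smul_eq_mul]
    have hsplit : ∑ x : Fin n → Bool, ∫ z in C x, |(Q[Δ | F n]) z - Δ z| ∂Q
        = ∫ z, |(Q[Δ | F n]) z - Δ z| ∂Q := by
      have hdisj : Set.Pairwise (↑(Finset.univ : Finset (Fin n → Bool))) (Function.onFun Disjoint C) := by
        intro x _ y _ hxy
        refine Set.disjoint_left.mpr fun z hz hz' => hxy ?_
        have h1 : past n z = x := hz
        have h2 : past n z = y := hz'
        rw [← h1, h2]
      have hunion : (⋃ x ∈ (Finset.univ : Finset (Fin n → Bool)), C x) = Set.univ := by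
        ext z
        simp only [Set.mem_iUnion, Set.mem_univ, iff_true, Finset.mem_univ, exists_true_left]
        exact ⟨past n z, rfl⟩
      rw [← integral_biUnion_finset _ (fun x _ => hCmeas x) hdisj
        (fun x _ => (habs_int n).integrableOn), hunion, Measure.restrict_univ]
    rw [hsum, ← hsplit]
    exact Finset.sum_le_sum fun x _ => atom x
  -- squeeze
  refine squeeze_zero (fun n => integral_nonneg fun z => tvDist_nonneg _ _) key hL1
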